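/- There is an absolute constant C such that for every n ≥ 2 and every n×n integer unit-Monge matrix M there exists a weighted digraph H that is a DAG, has integer edge weights, has size at most C·n·(log₂ n + 1), and contains 2n distinct distinguished vertices r[1],…,r[n], c[1],…,c[n], such that for all 1 ≤ i, j ≤ n a directed path from r[i] to c[j] exists in H and the distance d_H(r[i], c[j]) equals M[i,j]. -/

import Mathlib

/-- A weighted digraph: a finite vertex set `V ⊆ ℕ`, an edge set `E ⊆ V × V`,
and an integer weight function on edges. -/
structure WDigraph where
  V : Finset ℕ
  E : Finset (ℕ × ℕ)
  w : ℕ × ℕ → ℤ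
  edge_fst : ∀ e ∈ E, e.1 ∈ V
  edge_snd : ∀ e ∈ E, e.2 ∈ V

/-- The weight of a walk, given as the list of its vertices, under weight
function `w`: the sum of the weights of its consecutive edges. -/
def walkWeight (w : ℕ × ℕ → ℤ) (l : List ℕ) : ℤ :=
  ((l.zip l.tail).map w).sum

/-- A directed walk in `H`: a nonempty list of vertices of `H` in which each
consecutive pair is an edge of `H`. -/
def IsWalk (H : WDigraph) (l : List ℕ) : Prop :=
  l ≠ [] ∧ (∀ v ∈ l, v ∈ H.V) ∧ List.Chain' (fun u v => (u, v) ∈ H.E) l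

/-- A directed walk in `H` from `u` to `v`. -/
def IsWalkFromTo (H : WDigraph) (l : List ℕ) (u v : ℕ) : Prop :=
  IsWalk H l ∧ l.head? = some u ∧ l.getLast? = some v

/-- A directed path in `H` from `u` to `v`: a walk with no repeated vertex. -/
def IsPathFromTo (H : WDigraph) (l : List ℕ) (u v : ℕ) : Prop :=
  IsWalkFromTo H l u v ∧ l.Nodup

/-- `H` is a DAG: it contains no directed cycle, i.e. no closed walk using at
least one edge. -/
def IsDAG (H : WDigraph) : Prop :=
  ¬ ∃ (v : ℕ) (l : List ℕ), 2 ≤ l.length ∧ IsWalkFromTo H l v v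

/-- `d` is the distance from `u` to `v` in `H` under weight function `w`:
some directed path from `u` to `v` attains weight `d`, and every directed path
from `u` to `v` has weight at least `d`. -/
def HasDistW (H : WDigraph) (w : ℕ × ℕ → ℤ) (u v : ℕ) (d : ℤ) : Prop :=
  (∃ l, IsPathFromTo H l u v ∧ walkWeight w l = d) ∧
  ∀ l, IsPathFromTo H l u v → d ≤ walkWeight w l

/-- The size of a weighted digraph: number of vertices plus number of edges. -/
def WDigraph.size (H : WDigraph) : ℕ := H.V.card + H.E.card

/-- An `n × m` integer matrix (1-based indexing) is Monge. -/
def IsMonge (n m : ℕ) (M : ℕ → ℕ → ℤ) : Prop :=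
  ∀ i j, 1 ≤ i → i + 1 ≤ n → 1 ≤ j → j + 1 ≤ m →
    M (i + 1) j - M i j ≤ M (i + 1) (j + 1) - M i (j + 1)

/-- An `n × m` integer matrix (1-based indexing) is unit-Monge. -/
def IsUnitMonge (n m : ℕ) (M : ℕ → ℕ → ℤ) : Prop :=
  IsMonge n m M ∧
    ∀ i j, 1 ≤ i → i + 1 ≤ n → 1 ≤ j → j ≤ m →
      M (i + 1) j - M i j = -1 ∨ M (i + 1) j - M i j = 0 ∨ M (i + 1) j - M i j = 1

namespace UME

open Finset

variable (n : ℕ) (M : ℕ → ℕ → ℤ)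

def delta (k j : ℕ) : ℤ := M (k+1) j - M k j
def cnt (k j : ℕ) : ℤ := delta M k j + 1
def KK : Finset ℕ := Finset.Icc 1 (n-1)
def blk (t k : ℕ) : ℕ := (k-1)/2^t
def rows (t b : ℕ) : Finset ℕ := (KK n).filter (fun k => blk t k = b)
open scoped Classical in
noncomputable def breaks (t b : ℕ) : Finset ℕ :=
  (Finset.Icc 2 n).filter (fun j => ∃ k ∈ rows n t b, delta M k j ≠ delta M k (j-1))
noncomputable def rho (t b j : ℕ) : ℕ := ((breaks n M t b).filter (· ≤ j)).card
noncomputable def jstar (t b v : ℕ) : ℕ := sInf {j | 1 ≤ j ∧ j ≤ n ∧ rho n M t b j = v}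
noncomputable def bsum (t b j : ℕ) : ℤ := ∑ k ∈ rows n t b, cnt M k j
def LL : ℕ := Nat.clog 2 n
def rEnc (i : ℕ) : ℕ := Nat.pair 0 i
def cEnc (j : ℕ) : ℕ := Nat.pair 1 j
def nEnc (t b v : ℕ) : ℕ := Nat.pair 2 (Nat.pair t (Nat.pair b v))
def lv (m : ℕ) : ℕ :=
  if m.unpair.1 = 0 then 0 else if m.unpair.1 = 1 then LL n + 2
  else m.unpair.2.unpair.1 + 1

noncomputable def wf (e : ℕ × ℕ) : ℤ :=
  if e.1.unpair.1 = 0 then 1 - (e.1.unpair.2 : ℤ)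
  else if e.2.unpair.1 = 1 then M 1 e.2.unpair.2
  else if e.1.unpair.2.unpair.2.unpair.1 % 2 = 1 then
    bsum n M e.1.unpair.2.unpair.1 (e.1.unpair.2.unpair.2.unpair.1 - 1)
      (jstar n M e.2.unpair.2.unpair.1 e.2.unpair.2.unpair.2.unpair.1
        e.2.unpair.2.unpair.2.unpair.2)
  else 0

noncomputable def E1 : Finset (ℕ × ℕ) :=
  (Finset.Icc 1 n).biUnion fun i =>
    (range ((breaks n M 0 (i-1)).card + 1)).image fun v => (rEnc i, nEnc 0 (i-1) v)

open scoped Classical in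
noncomputable def E2 : Finset (ℕ × ℕ) :=
  (range (LL n)).biUnion fun t =>
    (range (2^(LL n - (t+1)))).biUnion fun b' =>
      (range ((breaks n M (t+1) b').card + 1)).biUnion fun v' =>
        if ∃ j, 1 ≤ j ∧ j ≤ n ∧ rho n M (t+1) b' j = v' then
          {(nEnc t (2*b') (rho n M t (2*b') (jstar n M (t+1) b' v')), nEnc (t+1) b' v'),
           (nEnc t (2*b'+1) (rho n M t (2*b'+1) (jstar n M (t+1) b' v')), nEnc (t+1) b' v')}
        else ∅

noncomputable def E3 : Finset (ℕ × ℕ) :=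
  (Finset.Icc 1 n).image fun j => (nEnc (LL n) 0 (rho n M (LL n) 0 j), cEnc j)

noncomputable def VV : Finset ℕ :=
  ((Finset.Icc 1 n).image rEnc ∪ (Finset.Icc 1 n).image cEnc) ∪
    (range (LL n + 1)).biUnion fun t =>
      (range (2^(LL n - t))).biUnion fun b =>
        (range ((breaks n M t b).card + 1)).image (nEnc t b)

noncomputable def EE : Finset (ℕ × ℕ) := E1 n M ∪ E2 n M ∪ E3 n M


section Lemmas

variable {n : ℕ} {M : ℕ → ℕ → ℤ}

@[simp] lemma unpair_rEnc (i : ℕ) : (rEnc i).unpair = (0, i) := Nat.unpair_pair 0 i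
@[simp] lemma unpair_cEnc (j : ℕ) : (cEnc j).unpair = (1, j) := Nat.unpair_pair 1 j
@[simp] lemma unpair_nEnc (t b v : ℕ) :
    (nEnc t b v).unpair = (2, Nat.pair t (Nat.pair b v)) := Nat.unpair_pair _ _

lemma rEnc_inj {i i' : ℕ} (h : rEnc i = rEnc i') : i = i' := by
  simpa [rEnc, Nat.pair_eq_pair] using h
lemma cEnc_inj {j j' : ℕ} (h : cEnc j = cEnc j') : j = j' := by
  simpa [cEnc, Nat.pair_eq_pair] using h
lemma nEnc_inj {t b v t' b' v' : ℕ} (h : nEnc t b v = nEnc t' b' v') :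
    t = t' ∧ b = b' ∧ v = v' := by
  simpa [nEnc, Nat.pair_eq_pair] using h
lemma rEnc_ne_cEnc (i j : ℕ) : rEnc i ≠ cEnc j := by
  intro h; simpa [rEnc, cEnc, Nat.pair_eq_pair] using h
lemma rEnc_ne_nEnc (i t b v : ℕ) : rEnc i ≠ nEnc t b v := by
  intro h; simpa [rEnc, nEnc, Nat.pair_eq_pair] using h
lemma cEnc_ne_nEnc (j t b v : ℕ) : cEnc j ≠ nEnc t b v := by
  intro h; simpa [cEnc, nEnc, Nat.pair_eq_pair] using h

@[simp] lemma lv_rEnc (i : ℕ) : lv n (rEnc i) = 0 := by simp [lv]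
@[simp] lemma lv_cEnc (j : ℕ) : lv n (cEnc j) = LL n + 2 := by simp [lv]
@[simp] lemma lv_nEnc (t b v : ℕ) : lv n (nEnc t b v) = t + 1 := by simp [lv]

lemma mem_KK {k : ℕ} (h : k ∈ KK n) : 1 ≤ k ∧ k + 1 ≤ n := by
  simp only [KK, Finset.mem_Icc] at h; omega

lemma mem_rows {t b k : ℕ} (h : k ∈ rows n t b) :
    1 ≤ k ∧ k + 1 ≤ n ∧ blk t k = b := by
  simp only [rows, Finset.mem_filter] at h
  exact ⟨(mem_KK h.1).1, (mem_KK h.1).2, h.2⟩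

lemma blk_succ (t k : ℕ) : blk (t+1) k = blk t k / 2 := by
  rw [blk, blk, pow_succ, ← Nat.div_div_eq_div_mul]

lemma rows_child_subset {t b' c : ℕ} (hc : c = 2*b' ∨ c = 2*b'+1) :
    rows n t c ⊆ rows n (t+1) b' := by
  intro k hk
  simp only [rows, Finset.mem_filter] at hk ⊢
  refine ⟨hk.1, ?_⟩
  rw [blk_succ, hk.2]
  rcases hc with h | h <;> simp [h, Nat.mul_div_cancel_left, Nat.mul_add_div]

lemma breaks_child_subset {t b' c : ℕ} (hc : c = 2*b' ∨ c = 2*b'+1) :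
    breaks n M t c ⊆ breaks n M (t+1) b' := by
  classical
  intro m hm
  simp only [breaks, Finset.mem_filter] at hm ⊢
  obtain ⟨h1, k, hk, hne⟩ := hm
  exact ⟨h1, k, rows_child_subset hc hk, hne⟩

lemma rho_le_card (t b j : ℕ) : rho n M t b j ≤ (breaks n M t b).card :=
  Finset.card_filter_le _ _

lemma filter_le_eq_of_rho_eq {S : Finset ℕ} {j j' : ℕ} (hjj : j ≤ j')
    (h : (S.filter (· ≤ j)).card = (S.filter (· ≤ j')).card) :
    S.filter (· ≤ j) = S.filter (· ≤ j') := by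
  refine Finset.eq_of_subset_of_card_le ?_ h.ge
  intro x hx
  simp only [Finset.mem_filter] at hx ⊢
  exact ⟨hx.1, hx.2.trans hjj⟩

lemma no_break_of_rho_eq {t b j j' m : ℕ} (hjj : j ≤ j')
    (h : rho n M t b j = rho n M t b j') (h1 : j < m) (h2 : m ≤ j') :
    m ∉ breaks n M t b := by
  intro hm
  have heq := filter_le_eq_of_rho_eq hjj h
  have : m ∈ (breaks n M t b).filter (· ≤ j') := Finset.mem_filter.mpr ⟨hm, h2⟩
  rw [← heq] at this
  have := (Finset.mem_filter.mp this).2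
  omega


section DeltaLemmas

variable (hM : IsUnitMonge n n M)
include hM

lemma delta_step {k j : ℕ} (hk : 1 ≤ k) (hk2 : k + 1 ≤ n) (hj : 2 ≤ j) (hjn : j ≤ n) :
    delta M k (j-1) ≤ delta M k j := by
  have := hM.1 k (j-1) hk hk2 (by omega) (by omega)
  have hj1 : j - 1 + 1 = j := by omega
  rw [hj1] at this
  exact this

lemma delta_mono {k j j' : ℕ} (hk : 1 ≤ k) (hk2 : k + 1 ≤ n) (hj : 1 ≤ j)
    (hjj : j ≤ j') (hj'n : j' ≤ n) : delta M k j ≤ delta M k j' := by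
  induction j' with
  | zero => omega
  | succ m ih =>
    rcases Nat.lt_or_ge j (m+1) with h | h
    · have h1 : delta M k j ≤ delta M k m := ih (by omega) (by omega)
      have h2 : delta M k m ≤ delta M k (m+1) := by
        have := delta_step hM hk hk2 (j := m+1) (by omega) (by omega)
        simpa using this
      exact h1.trans h2
    · have : j = m + 1 := by omega
      rw [this]

omit hM in
lemma delta_eq_of_no_break {t b k j j' : ℕ} (hk : k ∈ rows n t b) (hj : 1 ≤ j)
    (hjj : j ≤ j') (hj'n : j' ≤ n)
    (h : ∀ m, j < m → m ≤ j' → m ∉ breaks n M t b) :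
    delta M k j = delta M k j' := by
  classical
  induction j' with
  | zero => omega
  | succ m ih =>
    rcases Nat.lt_or_ge j (m+1) with hlt | hge
    · have h1 : delta M k j = delta M k m := by
        exact ih (by omega) (by omega) (fun m' h1 h2 => h m' h1 (by omega))
      have h2 : delta M k m = delta M k (m+1) := by
        have hnb := h (m+1) (by omega) (le_refl _)
        simp only [breaks, Finset.mem_filter, Finset.mem_Icc, not_and, not_exists] at hnb
        have := hnb ⟨by omega, hj'n⟩
        have hthis := this k hk
        push_neg at hthis
        simpa using hthis.symm
      rw [h1, h2]
    · have : j = m + 1 := by omega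
      rw [this]

omit hM in
lemma rho_eq_child {t b' c j j' : ℕ} (hc : c = 2*b' ∨ c = 2*b'+1) (hjj : j ≤ j')
    (h : rho n M (t+1) b' j = rho n M (t+1) b' j') :
    rho n M t c j = rho n M t c j' := by
  classical
  unfold rho
  congr 1
  have hsub := breaks_child_subset (n := n) (M := M) (t := t) hc
  have heq := filter_le_eq_of_rho_eq hjj h
  ext x
  simp only [Finset.mem_filter]
  constructor
  · rintro ⟨hx, hxle⟩; exact ⟨hx, hxle.trans hjj⟩
  · rintro ⟨hx, hxle⟩
    refine ⟨hx, ?_⟩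
    have : x ∈ (breaks n M (t+1) b').filter (· ≤ j') :=
      Finset.mem_filter.mpr ⟨hsub hx, hxle⟩
    rw [← heq] at this
    exact (Finset.mem_filter.mp this).2

omit hM in
lemma delta_const {t b k j j' : ℕ} (hk : k ∈ rows n t b) (hj : 1 ≤ j) (hjj : j ≤ j')
    (hj'n : j' ≤ n) (h : rho n M t b j = rho n M t b j') :
    delta M k j = delta M k j' :=
  delta_eq_of_no_break hk hj hjj hj'n (fun m h1 h2 => no_break_of_rho_eq hjj h h1 h2)

omit hM in
lemma bsum_const {t b j j' : ℕ} (hj : 1 ≤ j) (hjj : j ≤ j') (hj'n : j' ≤ n)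
    (h : rho n M t b j = rho n M t b j') : bsum n M t b j = bsum n M t b j' := by
  unfold bsum
  refine Finset.sum_congr rfl (fun k hk => ?_)
  unfold cnt
  rw [delta_const hk hj hjj hj'n h]

omit hM in
lemma bsum_const' {t b j j' : ℕ} (hj : 1 ≤ j) (hjn : j ≤ n) (hj' : 1 ≤ j') (hj'n : j' ≤ n)
    (h : rho n M t b j = rho n M t b j') : bsum n M t b j = bsum n M t b j' := by
  rcases le_total j j' with hle | hle
  · exact bsum_const hj hle hj'n h
  · exact (bsum_const hj' hle hjn h.symm).symm

omit hM in
lemma rho_eq_child' {t b' c j j' : ℕ} (hc : c = 2*b' ∨ c = 2*b'+1)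
    (h : rho n M (t+1) b' j = rho n M (t+1) b' j') :
    rho n M t c j = rho n M t c j' := by
  rcases le_total j j' with hle | hle
  · exact rho_eq_child hc hle h
  · exact (rho_eq_child hc hle h.symm).symm

end DeltaLemmas

section Graph

lemma pow_split {t : ℕ} (ht : t < LL n) : 2^(LL n - t) = 2^(LL n - (t+1)) * 2 := by
  rw [← pow_succ]
  congr 1
  omega

lemma mem_E2_of {t b j : ℕ} (ht : t < LL n) (hb : b < 2^(LL n - t))
    (hj : 1 ≤ j) (hjn : j ≤ n) :
    (nEnc t b (rho n M t b j), nEnc (t+1) (b/2) (rho n M (t+1) (b/2) j)) ∈ E2 n M := by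
  classical
  set b' := b / 2 with hb'
  set v' := rho n M (t+1) b' j with hv'
  have hbsplit : b = 2*b' ∨ b = 2*b'+1 := by omega
  have hex : ∃ j0, 1 ≤ j0 ∧ j0 ≤ n ∧ rho n M (t+1) b' j0 = v' := ⟨j, hj, hjn, rfl⟩
  have hjs := Nat.sInf_mem (s := {j0 | 1 ≤ j0 ∧ j0 ≤ n ∧ rho n M (t+1) b' j0 = v'}) hex
  obtain ⟨hjs1, hjs2, hjs3⟩ := hjs
  have hrho : rho n M t b (jstar n M (t+1) b' v') = rho n M t b j :=
    rho_eq_child' hbsplit (by rw [jstar, hjs3])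
  simp only [E2, Finset.mem_biUnion]
  refine ⟨t, Finset.mem_range.mpr ht, b', Finset.mem_range.mpr ?_, v',
    Finset.mem_range.mpr (Nat.lt_succ_of_le (rho_le_card _ _ _)), ?_⟩
  · rw [Nat.div_lt_iff_lt_mul (by norm_num), ← pow_split ht]
    exact hb
  · rw [if_pos hex]
    simp only [Finset.mem_insert, Finset.mem_singleton]
    rcases hbsplit with hh | hh
    · left; rw [← hh, hrho]
    · right; rw [← hh, hrho]

lemma mem_E2_elim {e : ℕ × ℕ} (he : e ∈ E2 n M) :
    ∃ t b' v', t < LL n ∧ b' < 2^(LL n - (t+1)) ∧ v' ≤ (breaks n M (t+1) b').card ∧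
      (∃ j0, 1 ≤ j0 ∧ j0 ≤ n ∧ rho n M (t+1) b' j0 = v') ∧
      ((e = (nEnc t (2*b') (rho n M t (2*b') (jstar n M (t+1) b' v')), nEnc (t+1) b' v')) ∨
       (e = (nEnc t (2*b'+1) (rho n M t (2*b'+1) (jstar n M (t+1) b' v')), nEnc (t+1) b' v'))) := by
  classical
  simp only [E2, Finset.mem_biUnion, Finset.mem_range] at he
  obtain ⟨t, ht, b', hb', v', hv', hmem⟩ := he
  refine ⟨t, b', v', ht, hb', Nat.lt_succ_iff.mp hv', ?_, ?_⟩
  · by_contra hcon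
    rw [if_neg hcon] at hmem
    exact absurd hmem (Finset.notMem_empty _)
  · by_cases hcon : ∃ j0, 1 ≤ j0 ∧ j0 ≤ n ∧ rho n M (t+1) b' j0 = v'
    · rw [if_pos hcon] at hmem
      simpa only [Finset.mem_insert, Finset.mem_singleton] using hmem
    · rw [if_neg hcon] at hmem
      exact absurd hmem (Finset.notMem_empty _)

lemma mem_E1_elim {e : ℕ × ℕ} (he : e ∈ E1 n M) :
    ∃ i v, 1 ≤ i ∧ i ≤ n ∧ v ≤ (breaks n M 0 (i-1)).card ∧
      e = (rEnc i, nEnc 0 (i-1) v) := by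
  simp only [E1, Finset.mem_biUnion, Finset.mem_image, Finset.mem_range, Finset.mem_Icc] at he
  obtain ⟨i, ⟨hi1, hi2⟩, v, hv, heq⟩ := he
  exact ⟨i, v, hi1, hi2, Nat.lt_succ_iff.mp hv, heq.symm⟩

lemma mem_E3_elim {e : ℕ × ℕ} (he : e ∈ E3 n M) :
    ∃ j, 1 ≤ j ∧ j ≤ n ∧ e = (nEnc (LL n) 0 (rho n M (LL n) 0 j), cEnc j) := by
  simp only [E3, Finset.mem_image, Finset.mem_Icc] at he
  obtain ⟨j, ⟨hj1, hj2⟩, heq⟩ := he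
  exact ⟨j, hj1, hj2, heq.symm⟩

lemma rEnc_mem_VV {i : ℕ} (h1 : 1 ≤ i) (h2 : i ≤ n) : rEnc i ∈ VV n M := by
  simp only [VV, Finset.mem_union, Finset.mem_image, Finset.mem_Icc]
  exact Or.inl (Or.inl ⟨i, ⟨h1, h2⟩, rfl⟩)

lemma cEnc_mem_VV {j : ℕ} (h1 : 1 ≤ j) (h2 : j ≤ n) : cEnc j ∈ VV n M := by
  simp only [VV, Finset.mem_union, Finset.mem_image, Finset.mem_Icc]
  exact Or.inl (Or.inr ⟨j, ⟨h1, h2⟩, rfl⟩)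

lemma nEnc_mem_VV {t b v : ℕ} (ht : t ≤ LL n) (hb : b < 2^(LL n - t))
    (hv : v ≤ (breaks n M t b).card) : nEnc t b v ∈ VV n M := by
  simp only [VV, Finset.mem_union, Finset.mem_biUnion, Finset.mem_image, Finset.mem_range]
  exact Or.inr ⟨t, by omega, b, hb, v, by omega, rfl⟩

variable (n M) in
noncomputable def HG : WDigraph where
  V := VV n M
  E := EE n M
  w := wf n M
  edge_fst := by
    intro e he
    simp only [EE, Finset.mem_union] at he
    rcases he with (he | he) | he
    · obtain ⟨i, v, h1, h2, hv, heq⟩ := mem_E1_elim he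
      rw [heq]
      exact rEnc_mem_VV h1 h2
    · obtain ⟨t, b', v', ht, hb', hv', ⟨j0, hj01, hj0n, hj0r⟩, heq | heq⟩ := mem_E2_elim he <;>
        rw [heq] <;>
        exact nEnc_mem_VV (by omega)
          (by rw [pow_split ht]; omega) (rho_le_card _ _ _)
    · obtain ⟨j, h1, h2, heq⟩ := mem_E3_elim he
      rw [heq]
      exact nEnc_mem_VV (le_refl _) (by simp) (rho_le_card _ _ _)
  edge_snd := by
    intro e he
    simp only [EE, Finset.mem_union] at he
    rcases he with (he | he) | he
    · obtain ⟨i, v, h1, h2, hv, heq⟩ := mem_E1_elim he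
      rw [heq]
      refine nEnc_mem_VV (by omega) ?_ hv
      have hn := Nat.le_pow_clog (by norm_num : 1 < 2) n
      simp only [Nat.sub_zero, LL]
      omega
    · obtain ⟨t, b', v', ht, hb', hv', hex, heq | heq⟩ := mem_E2_elim he <;>
        rw [heq] <;> exact nEnc_mem_VV (by omega) hb' hv'
    · obtain ⟨j, h1, h2, heq⟩ := mem_E3_elim he
      rw [heq]
      exact cEnc_mem_VV h1 h2

lemma lv_lt_of_mem_EE {e : ℕ × ℕ} (he : e ∈ EE n M) : lv n e.1 < lv n e.2 := by
  simp only [EE, Finset.mem_union] at he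
  rcases he with (he | he) | he
  · obtain ⟨i, v, _, _, _, heq⟩ := mem_E1_elim he
    rw [heq]; simp
  · obtain ⟨t, b', v', ht, _, _, _, heq | heq⟩ := mem_E2_elim he <;> rw [heq] <;> simp
  · obtain ⟨j, _, _, heq⟩ := mem_E3_elim he
    obtain ⟨j2, h1, h2, heq⟩ := mem_E3_elim he
    rw [heq]; simp

end Graph

section DAG

lemma lv_lt_getLast {l : List ℕ} {a : ℕ}
    (hc : List.Chain' (fun u v => (u, v) ∈ EE n M) (a :: l)) (hne : l ≠ []) :
    lv n a < lv n (l.getLast hne) := by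
  induction l generalizing a with
  | nil => exact absurd rfl hne
  | cons b l' ih =>
    unfold List.Chain' at hc; rw [List.isChain_cons_cons] at hc
    have h1 : lv n a < lv n b := lv_lt_of_mem_EE (e := (a, b)) hc.1
    cases l' with
    | nil => simpa using h1
    | cons x xs =>
      have h2 := ih hc.2 (by simp)
      calc lv n a < lv n b := h1
        _ < _ := by simpa using h2

lemma HG_isDAG : IsDAG (HG n M) := by
  rintro ⟨v, l, hlen, ⟨⟨hne, _, hchain⟩, hhead, hlast⟩⟩
  cases l with
  | nil => simp at hne
  | cons a l' =>
    simp only [List.head?_cons, Option.some.injEq] at hhead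
    have hne' : l' ≠ [] := by
      cases l' with
      | nil => simp at hlen
      | cons _ _ => simp
    have hlt := lv_lt_getLast (n := n) (M := M) hchain hne'
    have : (a :: l').getLast (by simp) = v := by
      have := List.getLast?_eq_getLast (l := a :: l') (by simp)
      rw [this] at hlast
      exact Option.some.inj hlast
    rw [List.getLast_cons hne'] at this
    rw [this, hhead] at hlt
    exact lt_irrefl _ hlt

end DAG

section Size

variable (hM : IsUnitMonge n n M)

lemma telescope_Icc (f : ℕ → ℤ) (m : ℕ) (hm : 1 ≤ m) :
    ∑ j ∈ Finset.Icc 2 m, (f j - f (j-1)) = f m - f 1 := by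
  induction m with
  | zero => omega
  | succ p ih =>
    rcases Nat.lt_or_ge p 1 with hp | hp
    · have : p = 0 := by omega
      subst this
      simp
    · rw [Finset.sum_Icc_succ_top (by omega), ih hp]
      simp

include hM in
lemma badcols_card {k : ℕ} (hk1 : 1 ≤ k) (hk2 : k + 1 ≤ n) :
    (((Finset.Icc 2 n)).filter (fun j => delta M k j ≠ delta M k (j-1))).card ≤ 2 := by
  classical
  set S := ((Finset.Icc 2 n)).filter (fun j => delta M k j ≠ delta M k (j-1)) with hS
  have hsub : S ⊆ Finset.Icc 2 n := Finset.filter_subset _ _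
  have hstep : ∀ j ∈ Finset.Icc 2 n, (0:ℤ) ≤ delta M k j - delta M k (j-1) := by
    intro j hj
    rw [Finset.mem_Icc] at hj
    have := delta_step hM hk1 hk2 hj.1 hj.2
    omega
  have h1 : (S.card : ℤ) = ∑ _j ∈ S, (1:ℤ) := by simp
  have h2 : ∑ _j ∈ S, (1:ℤ) ≤ ∑ j ∈ S, (delta M k j - delta M k (j-1)) := by
    refine Finset.sum_le_sum ?_
    intro j hj
    rw [hS, Finset.mem_filter] at hj
    have := hstep j hj.1
    have hne := hj.2
    omega
  have h3 : ∑ j ∈ S, (delta M k j - delta M k (j-1)) ≤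
      ∑ j ∈ Finset.Icc 2 n, (delta M k j - delta M k (j-1)) :=
    Finset.sum_le_sum_of_subset_of_nonneg hsub (fun j hj _ => hstep j hj)
  have h4 : ∑ j ∈ Finset.Icc 2 n, (delta M k j - delta M k (j-1)) = delta M k n - delta M k 1 :=
    telescope_Icc _ _ (by omega)
  have h5 : delta M k n ≤ 1 := by
    rcases hM.2 k n hk1 hk2 (by omega) (le_refl n) with h | h | h <;> (unfold delta; omega)
  have h6 : -1 ≤ delta M k 1 := by
    rcases hM.2 k 1 hk1 hk2 (le_refl 1) (by omega) with h | h | h <;> (unfold delta; omega)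
  have : (S.card : ℤ) ≤ 2 := by omega
  exact_mod_cast this

include hM in
lemma breaks_card_le {t b : ℕ} :
    (breaks n M t b).card ≤ 2 * (rows n t b).card := by
  classical
  have hsub : breaks n M t b ⊆ (rows n t b).biUnion
      (fun k => ((Finset.Icc 2 n)).filter (fun j => delta M k j ≠ delta M k (j-1))) := by
    intro m hm
    simp only [breaks, Finset.mem_filter] at hm
    obtain ⟨h1, k, hk, hne⟩ := hm
    simp only [Finset.mem_biUnion]
    exact ⟨k, hk, Finset.mem_filter.mpr ⟨h1, hne⟩⟩
  calc (breaks n M t b).card ≤ _ := Finset.card_le_card hsub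
    _ ≤ ∑ k ∈ rows n t b, (((Finset.Icc 2 n)).filter
        (fun j => delta M k j ≠ delta M k (j-1))).card := Finset.card_biUnion_le
    _ ≤ ∑ _k ∈ rows n t b, 2 := by
        refine Finset.sum_le_sum ?_
        intro k hk
        obtain ⟨hk1, hk2, _⟩ := mem_rows hk
        exact badcols_card hM hk1 hk2
    _ = 2 * (rows n t b).card := by rw [Finset.sum_const, smul_eq_mul, mul_comm]

lemma sum_rows_card {s : ℕ} (hs : s ≤ LL n) :
    ∑ b ∈ range (2^(LL n - s)), (rows n s b).card ≤ n := by
  classical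
  have hfib : (KK n).card = ∑ b ∈ range (2^(LL n - s)), (rows n s b).card := by
    refine Finset.card_eq_sum_card_fiberwise ?_
    intro k hk
    obtain ⟨hk1, hk2⟩ := mem_KK hk
    rw [Finset.mem_coe, Finset.mem_range, blk, Nat.div_lt_iff_lt_mul (by positivity)]
    have h2 : 2 ^ (LL n - s) * 2 ^ s = 2 ^ LL n := by
      rw [← pow_add]; congr 1; omega
    rw [h2]
    have h3 : n ≤ 2 ^ LL n := Nat.le_pow_clog (by norm_num : 1 < 2) n
    omega
  rw [← hfib]
  have : (KK n).card ≤ n := by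
    rw [KK, Nat.card_Icc]
    omega
  exact this

include hM in
lemma sum_breaks_card {s : ℕ} (hs : s ≤ LL n) :
    ∑ b ∈ range (2^(LL n - s)), (breaks n M s b).card ≤ 2 * n := by
  calc ∑ b ∈ range (2^(LL n - s)), (breaks n M s b).card
      ≤ ∑ b ∈ range (2^(LL n - s)), 2 * (rows n s b).card :=
        Finset.sum_le_sum (fun b _ => breaks_card_le hM)
    _ = 2 * ∑ b ∈ range (2^(LL n - s)), (rows n s b).card := by rw [Finset.mul_sum]
    _ ≤ 2 * n := by have := sum_rows_card (n := n) hs; omega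

lemma pow_LL_le (hn : 2 ≤ n) : 2 ^ LL n ≤ 2 * n := by
  have h2 := Nat.pow_pred_clog_lt_self (by norm_num : 1 < 2) (show 1 < n by omega)
  have hpos := Nat.clog_pos (by norm_num : 1 < 2) hn
  have : 2 ^ LL n = 2 * 2 ^ (LL n - 1) := by
    rw [← pow_succ']
    congr 1
    unfold LL
    omega
  unfold LL at *
  rw [this]
  have : 2 ^ (Nat.clog 2 n - 1) < n := by
    have := h2
    rwa [Nat.pred_eq_sub_one] at this
  omega

include hM in
lemma size_bound (hn : 2 ≤ n) : (HG n M).size ≤ 18 * n * (LL n + 1) := by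
  classical
  have hVc : (VV n M).card ≤ 6 * n * (LL n + 1) := by
    have h1 : ((Finset.Icc 1 n).image rEnc).card ≤ n := by
      calc _ ≤ (Finset.Icc 1 n).card := Finset.card_image_le
        _ = n := by rw [Nat.card_Icc]; omega
    have h2 : ((Finset.Icc 1 n).image cEnc).card ≤ n := by
      calc _ ≤ (Finset.Icc 1 n).card := Finset.card_image_le
        _ = n := by rw [Nat.card_Icc]; omega
    have h3 : ((range (LL n + 1)).biUnion fun t =>
        (range (2^(LL n - t))).biUnion fun b =>
          (range ((breaks n M t b).card + 1)).image (nEnc t b)).card ≤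
        4 * n * (LL n + 1) := by
      calc _ ≤ ∑ t ∈ range (LL n + 1), ((range (2^(LL n - t))).biUnion fun b =>
            (range ((breaks n M t b).card + 1)).image (nEnc t b)).card :=
            Finset.card_biUnion_le
        _ ≤ ∑ t ∈ range (LL n + 1), 4 * n := by
            refine Finset.sum_le_sum ?_
            intro t ht
            rw [Finset.mem_range] at ht
            calc _ ≤ ∑ b ∈ range (2^(LL n - t)),
                  ((range ((breaks n M t b).card + 1)).image (nEnc t b)).card :=
                  Finset.card_biUnion_le
              _ ≤ ∑ b ∈ range (2^(LL n - t)), ((breaks n M t b).card + 1) := by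
                  refine Finset.sum_le_sum (fun b _ => ?_)
                  calc _ ≤ (range ((breaks n M t b).card + 1)).card := Finset.card_image_le
                    _ = (breaks n M t b).card + 1 := by rw [Finset.card_range]
              _ = (∑ b ∈ range (2^(LL n - t)), (breaks n M t b).card) + 2^(LL n - t) := by
                  rw [Finset.sum_add_distrib, Finset.sum_const, Finset.card_range,
                    smul_eq_mul, mul_one]
              _ ≤ 2 * n + 2 ^ LL n := by
                  have ha := sum_breaks_card hM (s := t) (by omega)
                  have hb : 2 ^ (LL n - t) ≤ 2 ^ LL n :=
                    Nat.pow_le_pow_right (by norm_num) (by omega)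
                  omega
              _ ≤ 4 * n := by have := pow_LL_le (n := n) hn; omega
        _ = 4 * n * (LL n + 1) := by
            rw [Finset.sum_const, Finset.card_range, smul_eq_mul]
            ring
    calc (VV n M).card ≤ _ + _ := Finset.card_union_le _ _
      _ ≤ (_ + _) + _ := by gcongr <;> exact Finset.card_union_le _ _
      _ ≤ (n + n) + 4 * n * (LL n + 1) := by gcongr
      _ ≤ 6 * n * (LL n + 1) := by nlinarith [Nat.zero_le (LL n)]
  have hE1 : (E1 n M).card ≤ 3 * n := by
    calc (E1 n M).card ≤ ∑ i ∈ Finset.Icc 1 n,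
        ((range ((breaks n M 0 (i-1)).card + 1)).image
          (fun v => (rEnc i, nEnc 0 (i-1) v))).card := Finset.card_biUnion_le
      _ ≤ ∑ i ∈ Finset.Icc 1 n, 3 := by
          refine Finset.sum_le_sum (fun i hi => ?_)
          rw [Finset.mem_Icc] at hi
          have hb : (breaks n M 0 (i-1)).card ≤ 2 := by
            have hr : (rows n 0 (i-1)).card ≤ 1 := by
              have : rows n 0 (i-1) ⊆ {i} := by
                intro k hk
                obtain ⟨hk1, hk2, hk3⟩ := mem_rows hk
                have hi1 := hi.1
                simp only [blk, pow_zero, Nat.div_one] at hk3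
                simp only [Finset.mem_singleton]
                omega
              calc _ ≤ ({i} : Finset ℕ).card := Finset.card_le_card this
                _ = 1 := Finset.card_singleton i
            have := breaks_card_le hM (t := 0) (b := i - 1)
            omega
          calc _ ≤ (range ((breaks n M 0 (i-1)).card + 1)).card := Finset.card_image_le
            _ = (breaks n M 0 (i-1)).card + 1 := Finset.card_range _
            _ ≤ 3 := by omega
      _ = 3 * n := by rw [Finset.sum_const, Nat.card_Icc, smul_eq_mul]; omega
  have hE2 : (E2 n M).card ≤ 8 * n * LL n := by
    classical
    calc (E2 n M).card ≤ ∑ t ∈ range (LL n), ((range (2^(LL n - (t+1)))).biUnion fun b' =>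
          (range ((breaks n M (t+1) b').card + 1)).biUnion fun v' =>
            if ∃ j, 1 ≤ j ∧ j ≤ n ∧ rho n M (t+1) b' j = v' then
              {(nEnc t (2*b') (rho n M t (2*b') (jstar n M (t+1) b' v')), nEnc (t+1) b' v'),
               (nEnc t (2*b'+1) (rho n M t (2*b'+1) (jstar n M (t+1) b' v')), nEnc (t+1) b' v')}
            else ∅).card := Finset.card_biUnion_le
      _ ≤ ∑ t ∈ range (LL n), 8 * n := by
          refine Finset.sum_le_sum ?_
          intro t ht
          rw [Finset.mem_range] at ht
          calc _ ≤ ∑ b' ∈ range (2^(LL n - (t+1))),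
                ((range ((breaks n M (t+1) b').card + 1)).biUnion fun v' =>
                  if ∃ j, 1 ≤ j ∧ j ≤ n ∧ rho n M (t+1) b' j = v' then
                    {(nEnc t (2*b') (rho n M t (2*b') (jstar n M (t+1) b' v')), nEnc (t+1) b' v'),
                     (nEnc t (2*b'+1) (rho n M t (2*b'+1) (jstar n M (t+1) b' v')),
                       nEnc (t+1) b' v')}
                  else ∅).card := Finset.card_biUnion_le
            _ ≤ ∑ b' ∈ range (2^(LL n - (t+1))), 2 * ((breaks n M (t+1) b').card + 1) := by
                refine Finset.sum_le_sum (fun b' _ => ?_)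
                calc _ ≤ ∑ v' ∈ range ((breaks n M (t+1) b').card + 1), 2 := by
                      refine le_trans Finset.card_biUnion_le (Finset.sum_le_sum ?_)
                      intro v' _
                      split
                      · exact Finset.card_insert_le _ _ |>.trans (by simp)
                      · simp
                  _ = 2 * ((breaks n M (t+1) b').card + 1) := by
                      rw [Finset.sum_const, Finset.card_range, smul_eq_mul]; ring
            _ = 2 * ((∑ b' ∈ range (2^(LL n - (t+1))), (breaks n M (t+1) b').card)
                  + 2^(LL n - (t+1))) := by
                rw [← Finset.mul_sum, Finset.sum_add_distrib, Finset.sum_const,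
                  Finset.card_range, smul_eq_mul, mul_one]
            _ ≤ 8 * n := by
                have ha := sum_breaks_card hM (s := t + 1) (by omega)
                have hb : 2 ^ (LL n - (t+1)) ≤ 2 ^ LL n :=
                  Nat.pow_le_pow_right (by norm_num) (by omega)
                have := pow_LL_le (n := n) hn
                omega
      _ = 8 * n * LL n := by rw [Finset.sum_const, Finset.card_range, smul_eq_mul]; ring
  have hE3 : (E3 n M).card ≤ n := by
    calc (E3 n M).card ≤ (Finset.Icc 1 n).card := Finset.card_image_le
      _ = n := by rw [Nat.card_Icc]; omega
  have hE : (EE n M).card ≤ 3 * n + 8 * n * LL n + n := by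
    calc (EE n M).card ≤ (E1 n M ∪ E2 n M).card + (E3 n M).card := Finset.card_union_le _ _
      _ ≤ ((E1 n M).card + (E2 n M).card) + (E3 n M).card := by
          gcongr
          exact Finset.card_union_le _ _
      _ ≤ 3 * n + 8 * n * LL n + n := add_le_add (add_le_add hE1 hE2) hE3
  show (VV n M).card + (EE n M).card ≤ 18 * n * (LL n + 1)
  refine (add_le_add hVc hE).trans ?_
  nlinarith [Nat.zero_le (LL n), Nat.zero_le n]

end Size

section Walks

@[simp] lemma walkWeight_single (w : ℕ × ℕ → ℤ) (a : ℕ) : walkWeight w [a] = 0 := by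
  simp [walkWeight]

lemma walkWeight_cons2 (w : ℕ × ℕ → ℤ) (a b : ℕ) (l : List ℕ) :
    walkWeight w (a :: b :: l) = w (a, b) + walkWeight w (b :: l) := by
  simp [walkWeight]

@[simp] lemma wf_r (i x : ℕ) : wf n M (rEnc i, x) = 1 - (i : ℤ) := by
  simp [wf]

@[simp] lemma wf_nc (t b v j : ℕ) : wf n M (nEnc t b v, cEnc j) = M 1 j := by
  simp [wf]

@[simp] lemma wf_nn (t b v t' b' v' : ℕ) : wf n M (nEnc t b v, nEnc t' b' v') =
    if b % 2 = 1 then bsum n M t (b-1) (jstar n M t' b' v') else 0 := by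
  simp [wf]

lemma no_edge_from_cEnc {j0 z : ℕ} : (cEnc j0, z) ∉ EE n M := by
  intro h
  simp only [EE, Finset.mem_union] at h
  rcases h with (h | h) | h
  · obtain ⟨i, v, _, _, _, heq⟩ := mem_E1_elim h
    exact rEnc_ne_cEnc i j0 (congrArg Prod.fst heq).symm
  · obtain ⟨t, b', v', _, _, _, _, heq | heq⟩ := mem_E2_elim h <;>
      exact cEnc_ne_nEnc j0 _ _ _ (congrArg Prod.fst heq)
  · obtain ⟨j, _, _, heq⟩ := mem_E3_elim h
    exact cEnc_ne_nEnc j0 _ _ _ (congrArg Prod.fst heq)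

variable (n M) in
noncomputable def TT (i j t : ℕ) : ℤ :=
  ∑ k ∈ (KK n).filter (fun k => k < i ∧ blk t k ≠ blk t i), cnt M k j

lemma blk_le_of_le {t k i : ℕ} (h : k ≤ i) : blk t k ≤ blk t i :=
  Nat.div_le_div_right (by omega)

lemma TT_LL {i j : ℕ} (hin : i ≤ n) : TT n M i j (LL n) = 0 := by
  unfold TT
  rw [Finset.filter_false_of_mem, Finset.sum_empty]
  intro k hk
  obtain ⟨hk1, hk2⟩ := mem_KK hk
  have hN : n ≤ 2 ^ LL n := Nat.le_pow_clog (by norm_num : 1 < 2) n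
  have h1 : blk (LL n) k = 0 := Nat.div_eq_of_lt (by omega)
  have h2 : blk (LL n) i = 0 := Nat.div_eq_of_lt (by omega)
  simp [h1, h2]

lemma TT_zero {i j : ℕ} (hi : 1 ≤ i) (hin : i ≤ n) :
    TT n M i j 0 = ∑ k ∈ Finset.Icc 1 (i-1), cnt M k j := by
  unfold TT
  congr 1
  ext k
  simp only [Finset.mem_filter, Finset.mem_Icc, KK, blk, pow_zero, Nat.div_one]
  omega

lemma TT_step (i j t : ℕ) (hi : 1 ≤ i) :
    TT n M i j t = TT n M i j (t+1) +
      (if blk t i % 2 = 1 then bsum n M t (blk t i - 1) j else 0) := by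
  classical
  have hsub : (KK n).filter (fun k => k < i ∧ blk (t+1) k ≠ blk (t+1) i) ⊆
      (KK n).filter (fun k => k < i ∧ blk t k ≠ blk t i) := by
    intro k hk
    simp only [Finset.mem_filter] at hk ⊢
    refine ⟨hk.1, hk.2.1, ?_⟩
    intro hcon
    exact hk.2.2 (by rw [blk_succ, blk_succ, hcon])
  have hsplit := Finset.sum_sdiff (f := fun k => cnt M k j) hsub
  have hdiff : (KK n).filter (fun k => k < i ∧ blk t k ≠ blk t i) \
      (KK n).filter (fun k => k < i ∧ blk (t+1) k ≠ blk (t+1) i) =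
      (if blk t i % 2 = 1 then rows n t (blk t i - 1) else ∅) := by
    ext k
    simp only [Finset.mem_sdiff, Finset.mem_filter, rows]
    have hks := blk_succ t k
    have his := blk_succ t i
    have hm1 : k < i → blk t k ≤ blk t i := fun h => blk_le_of_le (by omega)
    have hm2 : i ≤ k → blk t i ≤ blk t k := fun h => blk_le_of_le (by omega)
    have hm3 : k ∈ KK n → 1 ≤ k := fun h => (mem_KK h).1
    split
    · next hodd =>
      simp only [Finset.mem_filter]
      constructor
      · rintro ⟨⟨hkK, hki, hne⟩, hnot⟩
        refine ⟨hkK, ?_⟩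
        by_contra hne2
        exact hnot ⟨hkK, hki, by omega⟩
      · rintro ⟨hkK, hbk⟩
        have hki : k < i := by
          rcases Nat.lt_or_ge k i with h | h
          · exact h
          · exfalso; have := hm2 h; omega
        exact ⟨⟨hkK, hki, by omega⟩, by
          rintro ⟨_, _, hne⟩
          exact hne (by omega)⟩
    · next heven =>
      simp only [Finset.notMem_empty, iff_false]
      rintro ⟨⟨hkK, hki, hne⟩, hnot⟩
      have := hm1 (by omega)
      exact hnot ⟨hkK, hki, by omega⟩
  rw [hdiff] at hsplit
  by_cases hodd : blk t i % 2 = 1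
  · rw [if_pos hodd] at hsplit ⊢
    unfold TT bsum
    linarith [hsplit]
  · rw [if_neg hodd] at hsplit ⊢
    simp only [Finset.sum_empty, zero_add, add_zero] at hsplit ⊢
    unfold TT
    linarith [hsplit]

variable (hM : IsUnitMonge n n M)

include hM in
lemma bsum_sub_const {t b' c j j' : ℕ} (hc : c = 2*b' ∨ c = 2*b'+1)
    (hj : 1 ≤ j) (hjn : j ≤ n) (hj' : 1 ≤ j') (hj'n : j' ≤ n)
    (h : rho n M (t+1) b' j = rho n M (t+1) b' j') :
    bsum n M t c j = bsum n M t c j' := by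
  unfold bsum cnt
  refine Finset.sum_congr rfl (fun k hk => ?_)
  have hk' : k ∈ rows n (t+1) b' := rows_child_subset hc hk
  rcases le_total j j' with hle | hle
  · rw [delta_const hk' hj hle hj'n h]
  · rw [delta_const hk' hj' hle hjn h.symm]

include hM in
lemma key_lemma {i j : ℕ} (hi : 1 ≤ i) (hin : i ≤ n) (hj : 1 ≤ j) (hjn : j ≤ n) :
    ∀ (l : List ℕ) (t b v : ℕ), t ≤ LL n → b = blk t i →
      IsWalkFromTo (HG n M) l (nEnc t b v) (cEnc j) →
      v = rho n M t b j ∧ walkWeight (wf n M) l = M 1 j + TT n M i j t := by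
  intro l
  induction l with
  | nil => rintro t b v _ _ ⟨⟨hne, _, _⟩, _, _⟩; exact absurd rfl hne
  | cons x rest ih =>
    rintro t b v ht hb ⟨⟨hne, hmem, hchain⟩, hhead, hlast⟩
    simp only [List.head?_cons, Option.some.injEq] at hhead
    subst hhead
    cases rest with
    | nil =>
      simp only [List.getLast?_singleton, Option.some.injEq] at hlast
      exact absurd hlast.symm (cEnc_ne_nEnc j t b v)
    | cons y rest' =>
      unfold List.Chain' at hchain; rw [List.isChain_cons_cons] at hchain
      have hedge : (nEnc t b v, y) ∈ EE n M := hchain.1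
      have hlast' : (y :: rest').getLast? = some (cEnc j) := by
        rwa [List.getLast?_cons_cons] at hlast
      simp only [EE, Finset.mem_union] at hedge
      rcases hedge with (hed | hed) | hed
      · obtain ⟨i0, v0, _, _, _, heq⟩ := mem_E1_elim hed
        exact absurd (congrArg Prod.fst heq).symm (rEnc_ne_nEnc i0 t b v)
      · -- E2 edge
        obtain ⟨t0, b'0, v'0, ht0, hb'0, hv'0, ⟨j0, hj01, hj0n, hj0r⟩, heq⟩ := mem_E2_elim hed
        have hyeq : y = nEnc (t0+1) b'0 v'0 := by
          rcases heq with heq | heq <;> exact congrArg Prod.snd heq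
        have hxeq : ∃ c, (c = 2*b'0 ∨ c = 2*b'0+1) ∧ t = t0 ∧ b = c ∧
            v = rho n M t0 c (jstar n M (t0+1) b'0 v'0) := by
          rcases heq with heq | heq
          · have := nEnc_inj (congrArg Prod.fst heq)
            exact ⟨2*b'0, Or.inl rfl, this.1, this.2.1, this.2.2⟩
          · have := nEnc_inj (congrArg Prod.fst heq)
            exact ⟨2*b'0+1, Or.inr rfl, this.1, this.2.1, this.2.2⟩
        obtain ⟨cc, hcc, htt0, hbcc, hvv⟩ := hxeq
        subst htt0
        -- apply IH to the tail
        have hwalk' : IsWalkFromTo (HG n M) (y :: rest') (nEnc (t+1) b'0 v'0) (cEnc j) := by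
          refine ⟨⟨by simp, fun z hz => hmem z (List.mem_cons_of_mem _ hz), hchain.2⟩, ?_, hlast'⟩
          rw [hyeq]; simp
        have hb'blk : b'0 = blk (t+1) i := by
          rw [blk_succ, ← hb, hbcc]
          omega
        have hIH := ih (t+1) b'0 v'0 (by omega) hb'blk hwalk'
        obtain ⟨hv'0j, hwrest⟩ := hIH
        -- jstar properties
        have hjs := Nat.sInf_mem (s := {j1 | 1 ≤ j1 ∧ j1 ≤ n ∧ rho n M (t+1) b'0 j1 = v'0})
          ⟨j0, hj01, hj0n, hj0r⟩
        obtain ⟨hjs1, hjs2, hjs3⟩ := hjs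
        have hjs3' : rho n M (t+1) b'0 (jstar n M (t+1) b'0 v'0) = rho n M (t+1) b'0 j := by
          rw [jstar]; rw [hjs3, hv'0j]
        -- conclude v = rho t0 b j
        have hveq : v = rho n M t b j := by
          rw [hvv, hbcc]
          exact rho_eq_child' hcc hjs3'
        refine ⟨hveq, ?_⟩
        rw [hyeq] at hwrest ⊢
        rw [walkWeight_cons2, hwrest, wf_nn, TT_step (n := n) (M := M) i j t hi, ← hb]
        by_cases hodd : b % 2 = 1
        · rw [if_pos hodd, if_pos (hb ▸ hodd)]
          have hbs : bsum n M t (b-1) (jstar n M (t+1) b'0 v'0) = bsum n M t (b-1) j := by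
            refine bsum_sub_const hM (b' := b'0) ?_ hjs1 hjs2 hj hjn hjs3'
            omega
          rw [hbs]
          ring
        · rw [if_neg hodd, if_neg (hb ▸ hodd)]
          ring
      · -- E3 edge
        obtain ⟨j0, hj01, hj0n, heq⟩ := mem_E3_elim hed
        have hxinj := nEnc_inj (congrArg Prod.fst heq)
        have hyeq : y = cEnc j0 := congrArg Prod.snd heq
        have hrest' : rest' = [] := by
          cases rest' with
          | nil => rfl
          | cons z zs =>
            rw [List.isChain_cons_cons] at hchain
            exact absurd (hyeq ▸ hchain.2.1) no_edge_from_cEnc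
        subst hrest'
        have hj0j : j0 = j := by
          rw [hyeq] at hlast'
          simp only [List.getLast?_singleton, Option.some.injEq] at hlast'
          exact cEnc_inj hlast'
        subst hj0j
        obtain ⟨htL, hb0, hv⟩ := hxinj
        refine ⟨by rw [hv, ← htL, ← hb0], ?_⟩
        rw [hyeq, walkWeight_cons2, walkWeight_single, wf_nc]
        rw [htL, TT_LL hin]

end Walks

section Main

variable (hM : IsUnitMonge n n M)

omit hM in
lemma sum_delta (j p : ℕ) : ∑ k ∈ Finset.Icc 1 p, delta M k j = M (p+1) j - M 1 j := by
  induction p with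
  | zero => simp
  | succ q ih =>
    rw [Finset.sum_Icc_succ_top (by omega), ih]
    unfold delta
    ring

include hM in
lemma walk_weight_full {i j : ℕ} (hi : 1 ≤ i) (hin : i ≤ n) (hj : 1 ≤ j) (hjn : j ≤ n)
    {l : List ℕ} (hw : IsWalkFromTo (HG n M) l (rEnc i) (cEnc j)) :
    walkWeight (wf n M) l = M i j := by
  obtain ⟨⟨hne, hmem, hchain⟩, hhead, hlast⟩ := hw
  cases l with
  | nil => exact absurd rfl hne
  | cons x rest =>
    simp only [List.head?_cons, Option.some.injEq] at hhead
    subst hhead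
    cases rest with
    | nil =>
      simp only [List.getLast?_singleton, Option.some.injEq] at hlast
      exact absurd hlast (rEnc_ne_cEnc i j)
    | cons y rest' =>
      unfold List.Chain' at hchain; rw [List.isChain_cons_cons] at hchain
      have hedge : (rEnc i, y) ∈ EE n M := hchain.1
      have hlast' : (y :: rest').getLast? = some (cEnc j) := by
        rwa [List.getLast?_cons_cons] at hlast
      simp only [EE, Finset.mem_union] at hedge
      rcases hedge with (hed | hed) | hed
      · obtain ⟨i0, v0, hi01, hi0n, hv0, heq⟩ := mem_E1_elim hed
        have hii0 : i = i0 := rEnc_inj (congrArg Prod.fst heq)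
        subst hii0
        have hyeq : y = nEnc 0 (i-1) v0 := congrArg Prod.snd heq
        have hwalk' : IsWalkFromTo (HG n M) (y :: rest') (nEnc 0 (i-1) v0) (cEnc j) := by
          refine ⟨⟨by simp, fun z hz => hmem z (List.mem_cons_of_mem _ hz), hchain.2⟩, ?_, hlast'⟩
          rw [hyeq]; simp
        have hb0 : (i - 1 : ℕ) = blk 0 i := by
          simp [blk]
        have hkey := key_lemma hM hi hin hj hjn (y :: rest') 0 (i-1) v0 (by omega) hb0 hwalk'
        rw [walkWeight_cons2, hkey.2, wf_r]
        rw [TT_zero hi hin]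
        have hs : ∑ k ∈ Finset.Icc 1 (i-1), cnt M k j =
            (M i j - M 1 j) + (i - 1 : ℕ) := by
          unfold cnt
          rw [Finset.sum_add_distrib, sum_delta (M := M) j (i-1), Finset.sum_const,
            Nat.card_Icc]
          have : i - 1 + 1 = i := by omega
          rw [this]
          simp
        rw [hs]
        have hcast : ((i - 1 : ℕ) : ℤ) = (i : ℤ) - 1 := by omega
        rw [hcast]
        ring
      · obtain ⟨t0, b'0, v'0, _, _, _, _, heq | heq⟩ := mem_E2_elim hed <;>
          exact absurd (congrArg Prod.fst heq) (rEnc_ne_nEnc _ _ _ _)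
      · obtain ⟨j0, _, _, heq⟩ := mem_E3_elim hed
        exact absurd (congrArg Prod.fst heq) (rEnc_ne_nEnc _ _ _ _)

lemma getLast?_cons_ne {α : Type*} {a : α} {l : List α} (h : l ≠ []) :
    (a :: l).getLast? = l.getLast? := by
  cases l with
  | nil => exact absurd rfl h
  | cons b t => simp

lemma blk_lt {t i : ℕ} (hin : i ≤ n) : blk t i < 2 ^ (LL n - t) := by
  have hN : n ≤ 2 ^ LL n := Nat.le_pow_clog (by norm_num : 1 < 2) n
  have h1 : i - 1 < 2 ^ (LL n - t) * 2 ^ t := by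
    have h2 : 2 ^ (LL n - t) * 2 ^ t = 2 ^ ((LL n - t) + t) := (pow_add 2 _ _).symm
    have h3 : 2 ^ LL n ≤ 2 ^ ((LL n - t) + t) := Nat.pow_le_pow_right (by norm_num) (by omega)
    have h4 : 0 < 2 ^ ((LL n - t) + t) := by positivity
    omega
  rw [blk, Nat.div_lt_iff_lt_mul (by positivity)]
  exact h1

include hM in
lemma exists_tail_path {i j : ℕ} (hi : 1 ≤ i) (hin : i ≤ n) (hj : 1 ≤ j) (hjn : j ≤ n) :
    ∀ (d t : ℕ), t + d = LL n →
      ∃ l, IsWalkFromTo (HG n M) l (nEnc t (blk t i) (rho n M t (blk t i) j)) (cEnc j) ∧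
        l.Nodup ∧ ∀ x ∈ l, t + 1 ≤ lv n x := by
  intro d
  induction d with
  | zero =>
    intro t ht
    have htL : t = LL n := by omega
    subst htL
    have hb : blk (LL n) i = 0 := by
      have hN : n ≤ 2 ^ LL n := Nat.le_pow_clog (by norm_num : 1 < 2) n
      exact Nat.div_eq_of_lt (by omega)
    refine ⟨[nEnc (LL n) 0 (rho n M (LL n) 0 j), cEnc j], ⟨⟨by simp, ?_, ?_⟩, ?_, ?_⟩, ?_, ?_⟩
    · intro z hz
      simp only [List.mem_cons, List.mem_singleton, List.not_mem_nil, or_false] at hz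
      rcases hz with h | h
      · rw [h]; exact nEnc_mem_VV (le_refl _) (by simp) (rho_le_card _ _ _)
      · rw [h]; exact cEnc_mem_VV hj hjn
    · refine List.isChain_cons_cons.mpr ⟨?_, by simp⟩
      have : (nEnc (LL n) 0 (rho n M (LL n) 0 j), cEnc j) ∈ E3 n M := by
        simp only [E3, Finset.mem_image]
        exact ⟨j, Finset.mem_Icc.mpr ⟨hj, hjn⟩, rfl⟩
      simp only [HG, EE, Finset.mem_union]
      exact Or.inr this
    · rw [hb]; simp
    · simp
    · simp only [List.nodup_cons, List.mem_singleton, List.not_mem_nil, not_false_iff,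
        List.nodup_nil, and_true]
      exact fun h => cEnc_ne_nEnc j _ _ _ h.symm
    · intro x hx
      simp only [List.mem_cons, List.mem_singleton, List.not_mem_nil, or_false] at hx
      rcases hx with h | h <;> rw [h] <;> simp
  | succ d ihd =>
    intro t ht
    have ht' : t < LL n := by omega
    obtain ⟨l', hl'walk, hl'nodup, hl'lv⟩ := ihd (t+1) (by omega)
    have hblk : blk (t+1) i = blk t i / 2 := blk_succ t i
    have hedge : (nEnc t (blk t i) (rho n M t (blk t i) j),
        nEnc (t+1) (blk (t+1) i) (rho n M (t+1) (blk (t+1) i) j)) ∈ E2 n M := by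
      rw [hblk]
      exact mem_E2_of ht' (blk_lt hin) hj hjn
    obtain ⟨⟨hl'ne, hl'mem, hl'chain⟩, hl'head, hl'last⟩ := hl'walk
    refine ⟨nEnc t (blk t i) (rho n M t (blk t i) j) :: l', ⟨⟨by simp, ?_, ?_⟩, ?_, ?_⟩, ?_, ?_⟩
    · intro z hz
      rcases List.mem_cons.mp hz with h | h
      · rw [h]
        exact nEnc_mem_VV (by omega) (blk_lt hin) (rho_le_card _ _ _)
      · exact hl'mem z h
    · unfold List.Chain'; rw [List.isChain_cons]
      refine ⟨?_, hl'chain⟩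
      intro z hz
      rw [hl'head] at hz
      simp only [Option.mem_def, Option.some.injEq] at hz
      rw [hz] at hedge
      simp only [HG, EE, Finset.mem_union]
      exact Or.inl (Or.inr hedge)
    · simp
    · rw [getLast?_cons_ne hl'ne]
      exact hl'last
    · rw [List.nodup_cons]
      refine ⟨?_, hl'nodup⟩
      intro hcon
      have := hl'lv _ hcon
      simp only [lv_nEnc] at this
      omega
    · intro x hx
      rcases List.mem_cons.mp hx with h | h
      · rw [h]; simp
      · have := hl'lv x h; omega

include hM in
lemma hasDist {i j : ℕ} (hi : 1 ≤ i) (hin : i ≤ n) (hj : 1 ≤ j) (hjn : j ≤ n) :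
    HasDistW (HG n M) (HG n M).w (rEnc i) (cEnc j) (M i j) := by
  have hwf : (HG n M).w = wf n M := rfl
  constructor
  · -- existence
    obtain ⟨l, hlwalk, hlnodup, hllv⟩ :=
      exists_tail_path hM hi hin hj hjn (LL n) 0 (by omega)
    obtain ⟨⟨hlne, hlmem, hlchain⟩, hlhead, hllast⟩ := hlwalk
    have hb0 : blk 0 i = i - 1 := by simp [blk]
    have hedge : (rEnc i, nEnc 0 (blk 0 i) (rho n M 0 (blk 0 i) j)) ∈ E1 n M := by
      simp only [E1, Finset.mem_biUnion, Finset.mem_image, Finset.mem_range]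
      refine ⟨i, Finset.mem_Icc.mpr ⟨hi, hin⟩, rho n M 0 (blk 0 i) j, ?_, ?_⟩
      · rw [hb0]
        exact Nat.lt_succ_of_le (rho_le_card _ _ _)
      · rw [hb0]
    refine ⟨rEnc i :: l, ⟨⟨⟨by simp, ?_, ?_⟩, ?_, ?_⟩, ?_⟩, ?_⟩
    · intro z hz
      rcases List.mem_cons.mp hz with h | h
      · rw [h]; exact rEnc_mem_VV hi hin
      · exact hlmem z h
    · unfold List.Chain'; rw [List.isChain_cons]
      refine ⟨?_, hlchain⟩
      intro z hz
      rw [hlhead] at hz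
      simp only [Option.mem_def, Option.some.injEq] at hz
      rw [hz] at hedge
      simp only [HG, EE, Finset.mem_union]
      exact Or.inl (Or.inl hedge)
    · simp
    · rw [getLast?_cons_ne hlne]
      exact hllast
    · rw [List.nodup_cons]
      refine ⟨?_, hlnodup⟩
      intro hcon
      have := hllv _ hcon
      simp only [lv_rEnc] at this
      omega
    · -- weight
      rw [hwf]
      refine walk_weight_full hM hi hin hj hjn ⟨⟨by simp, ?_, ?_⟩, ?_, ?_⟩
      · intro z hz
        rcases List.mem_cons.mp hz with h | h
        · rw [h]; exact rEnc_mem_VV hi hin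
        · exact hlmem z h
      · unfold List.Chain'; rw [List.isChain_cons]
        refine ⟨?_, hlchain⟩
        intro z hz
        rw [hlhead] at hz
        simp only [Option.mem_def, Option.some.injEq] at hz
        rw [hz] at hedge
        simp only [HG, EE, Finset.mem_union]
        exact Or.inl (Or.inl hedge)
      · simp
      · rw [getLast?_cons_ne hlne]
        exact hllast
  · intro l hl
    rw [hwf, walk_weight_full hM hi hin hj hjn hl.1]

include hM in
lemma hasDist' {i j : ℕ} (hi : 1 ≤ i) (hin : i ≤ n) (hj : 1 ≤ j) (hjn : j ≤ n) :
    HasDistW (HG n M) (HG n M).w (rEnc i) (cEnc j) (M i j) := hasDist hM hi hin hj hjn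

omit hM in
lemma LL_real_bound (hn : 2 ≤ n) : ((LL n : ℝ) + 1) ≤ 2 * (Real.logb 2 n + 1) := by
  have h1 : 2 ^ (LL n - 1) < n := by
    have := Nat.pow_pred_clog_lt_self (by norm_num : (1:ℕ) < 2) (show 1 < n by omega)
    rwa [Nat.pred_eq_sub_one] at this
  have hpos := Nat.clog_pos (by norm_num : (1:ℕ) < 2) hn
  have h2 : ((2:ℝ) ^ (LL n - 1)) ≤ (n : ℝ) := by
    have : (2:ℕ) ^ (LL n - 1) ≤ n := le_of_lt h1
    exact_mod_cast this
  have h3 : Real.logb 2 ((2:ℝ) ^ (LL n - 1)) ≤ Real.logb 2 n :=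
    Real.logb_le_logb_of_le (by norm_num) (by positivity) h2
  rw [Real.logb_pow, Real.logb_self_eq_one (by norm_num)] at h3
  have h4 : ((LL n - 1 : ℕ) : ℝ) = (LL n : ℝ) - 1 := by
    have : 1 ≤ LL n := hpos
    push_cast [this]
    ring
  rw [h4, mul_one] at h3
  have h5 : (0:ℝ) ≤ Real.logb 2 n := Real.logb_nonneg (by norm_num)
    (by exact_mod_cast (by omega : 1 ≤ n))
  linarith

end Main






end Lemmas

end UME

theorem unitMonge_emulator :
    ∃ C : ℝ, 0 < C ∧
      ∀ (n : ℕ) (M : ℕ → ℕ → ℤ), 2 ≤ n → IsUnitMonge n n M →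
        ∃ (H : WDigraph) (r c : ℕ → ℕ),
          IsDAG H ∧
          ((H.size : ℝ) ≤ C * (n : ℝ) * (Real.logb 2 (n : ℝ) + 1)) ∧
          (∀ x, 1 ≤ x → x ≤ n → r x ∈ H.V) ∧
          (∀ y, 1 ≤ y → y ≤ n → c y ∈ H.V) ∧
          (∀ x x', 1 ≤ x → x ≤ n → 1 ≤ x' → x' ≤ n → r x = r x' → x = x') ∧
          (∀ y y', 1 ≤ y → y ≤ n → 1 ≤ y' → y' ≤ n → c y = c y' → y = y') ∧
          (∀ x y, 1 ≤ x → x ≤ n → 1 ≤ y → y ≤ n → r x ≠ c y) ∧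
          (∀ i j, 1 ≤ i → i ≤ n → 1 ≤ j → j ≤ n →
            HasDistW H H.w (r i) (c j) (M i j)) := by
  refine ⟨36, by norm_num, ?_⟩
  intro n M hn hM
  refine ⟨UME.HG n M, UME.rEnc, UME.cEnc, UME.HG_isDAG, ?_, ?_, ?_, ?_, ?_, ?_, ?_⟩
  · have h1 : (UME.HG n M).size ≤ 18 * n * (UME.LL n + 1) := UME.size_bound hM hn
    have h2 := UME.LL_real_bound (n := n) hn
    have hcast : ((UME.HG n M).size : ℝ) ≤ ((18 * n * (UME.LL n + 1) : ℕ) : ℝ) := by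
      exact_mod_cast h1
    push_cast at hcast
    have hn0 : (0:ℝ) ≤ (n:ℝ) := by positivity
    calc ((UME.HG n M).size : ℝ) ≤ 18 * (n:ℝ) * ((UME.LL n : ℝ) + 1) := hcast
      _ ≤ 18 * (n:ℝ) * (2 * (Real.logb 2 n + 1)) := by nlinarith [h2, hn0]
      _ = 36 * (n:ℝ) * (Real.logb 2 n + 1) := by ring
  · exact fun x h1 h2 => UME.rEnc_mem_VV h1 h2
  · exact fun y h1 h2 => UME.cEnc_mem_VV h1 h2
  · exact fun x x' _ _ _ _ h => UME.rEnc_inj h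
  · exact fun y y' _ _ _ _ h => UME.cEnc_inj h
  · exact fun x y _ _ _ _ => UME.rEnc_ne_cEnc x y
  · exact fun i j h1 h2 h3 h4 => UME.hasDist hM h1 h2 h3 h4
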